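/- For positive integers k ≤ N, the sum over j from 0 to N-k of C(2N+1, 2j)·C(N-j, k) equals C(2N-k, k)·4^(N-k). -/

import Mathlib

open Finset

namespace BSI

def F (N k : ℕ) : ℕ := ∑ j ∈ range (N+1), (2*N+1).choose (2*j) * (N-j).choose k
def H (N k : ℕ) : ℕ := ∑ j ∈ range (N+1), (2*N+1).choose (2*j+1) * (N-j).choose k
def G (N k : ℕ) : ℕ := (2*N-k).choose k * 4^(N-k)

lemma pasc2e (n j : ℕ) : (2*n+3).choose (2*j+2)
    = (2*n+1).choose (2*j) + 2*((2*n+1).choose (2*j+1)) + (2*n+1).choose (2*j+2) := by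
  rw [show 2*n+3 = (2*n+2)+1 from rfl, show 2*j+2 = (2*j+1)+1 from rfl,
    Nat.choose_succ_succ (2*n+2) (2*j+1),
    show 2*n+2 = (2*n+1)+1 from rfl,
    Nat.choose_succ_succ (2*n+1) (2*j),
    show (2*j+1)+1 = (2*j+1)+1 from rfl,
    Nat.choose_succ_succ (2*n+1) (2*j+1)]
  ring

lemma pasc2o (n j : ℕ) : (2*n+3).choose (2*j+3)
    = (2*n+1).choose (2*j+1) + 2*((2*n+1).choose (2*j+2)) + (2*n+1).choose (2*j+3) := by
  rw [show 2*n+3 = (2*n+2)+1 from rfl, show 2*j+3 = (2*j+2)+1 from rfl,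
    Nat.choose_succ_succ (2*n+2) (2*j+2),
    show 2*n+2 = (2*n+1)+1 from rfl,
    Nat.choose_succ_succ (2*n+1) (2*j+1),
    Nat.choose_succ_succ (2*n+1) (2*j+2)]
  ring

-- even first factor: full-range sum with N+1 in second factor, two expressions
lemma EA (N k : ℕ) : ∑ j ∈ range (N+2), (2*N+1).choose (2*j) * (N+1-j).choose (k+1)
    = F N (k+1) + F N k := by
  rw [Finset.sum_range_succ]
  have h0 : (2*N+1).choose (2*(N+1)) = 0 := Nat.choose_eq_zero_of_lt (by omega)
  rw [h0, zero_mul, add_zero, F, F, ← Finset.sum_add_distrib]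
  apply Finset.sum_congr rfl
  intro j hj
  have hjN : j ≤ N := by simpa [Nat.lt_succ_iff] using hj
  have : N+1-j = (N-j)+1 := by omega
  rw [this, Nat.choose_succ_succ (N-j) k, Nat.mul_add]
  ring

lemma EA0 (N : ℕ) : ∑ j ∈ range (N+2), (2*N+1).choose (2*j) * (N+1-j).choose 0
    = F N 0 := by
  rw [Finset.sum_range_succ]
  have h0 : (2*N+1).choose (2*(N+1)) = 0 := Nat.choose_eq_zero_of_lt (by omega)
  rw [h0, zero_mul, add_zero, F]
  apply Finset.sum_congr rfl
  intro j hj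
  simp

lemma EB (N k : ℕ) : ∑ j ∈ range (N+2), (2*N+1).choose (2*j) * (N+1-j).choose k
    = (N+1).choose k + ∑ j ∈ range (N+1), (2*N+1).choose (2*j+2) * (N-j).choose k := by
  rw [Finset.sum_range_succ' (fun j => (2*N+1).choose (2*j) * (N+1-j).choose k) (N+1)]
  simp [Nat.mul_succ, Nat.succ_sub_succ, add_comm]

-- odd first factor versions
lemma OA (N k : ℕ) : ∑ j ∈ range (N+2), (2*N+1).choose (2*j+1) * (N+1-j).choose (k+1)
    = H N (k+1) + H N k := by
  rw [Finset.sum_range_succ]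
  have h0 : (2*N+1).choose (2*(N+1)+1) = 0 := Nat.choose_eq_zero_of_lt (by omega)
  rw [h0, zero_mul, add_zero, H, H, ← Finset.sum_add_distrib]
  apply Finset.sum_congr rfl
  intro j hj
  have hjN : j ≤ N := by simpa [Nat.lt_succ_iff] using hj
  have : N+1-j = (N-j)+1 := by omega
  rw [this, Nat.choose_succ_succ (N-j) k, Nat.mul_add]
  ring

lemma OA0 (N : ℕ) : ∑ j ∈ range (N+2), (2*N+1).choose (2*j+1) * (N+1-j).choose 0
    = H N 0 := by
  rw [Finset.sum_range_succ]
  have h0 : (2*N+1).choose (2*(N+1)+1) = 0 := Nat.choose_eq_zero_of_lt (by omega)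
  rw [h0, zero_mul, add_zero, H]
  apply Finset.sum_congr rfl
  intro j hj
  simp

lemma OB (N k : ℕ) : ∑ j ∈ range (N+2), (2*N+1).choose (2*j+1) * (N+1-j).choose k
    = (2*N+1) * (N+1).choose k + ∑ j ∈ range (N+1), (2*N+1).choose (2*j+3) * (N-j).choose k := by
  rw [Finset.sum_range_succ' (fun j => (2*N+1).choose (2*j+1) * (N+1-j).choose k) (N+1)]
  simp only [Nat.mul_succ, Nat.succ_sub_succ, Nat.choose_one_right]
  rw [add_comm]
  congr 1
  · simp [Nat.choose_one_right]

lemma R1 (N k : ℕ) : F (N+1) (k+1) = 2*F N (k+1) + F N k + 2*H N (k+1) := by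
  have hsplit : F (N+1) (k+1) = (N+1).choose (k+1)
      + ∑ j ∈ range (N+1), (2*N+3).choose (2*j+2) * (N-j).choose (k+1) := by
    rw [F, Finset.sum_range_succ' _ (N+1), add_comm]
    congr 1
    · simp
    · apply Finset.sum_congr rfl; intro j hj; congr 2 <;> omega
  have hexp : ∑ j ∈ range (N+1), (2*N+3).choose (2*j+2) * (N-j).choose (k+1)
      = F N (k+1) + 2 * H N (k+1)
        + ∑ j ∈ range (N+1), (2*N+1).choose (2*j+2) * (N-j).choose (k+1) := by
    rw [F, H, Finset.mul_sum, ← Finset.sum_add_distrib, ← Finset.sum_add_distrib]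
    apply Finset.sum_congr rfl; intro j hj
    rw [pasc2e]; ring
  have h1 := EA N k
  have h2 := EB N (k+1)
  omega

lemma R1b (N : ℕ) : F (N+1) 0 = 2*F N 0 + 2*H N 0 := by
  have hfun : ∀ j ∈ range (N+2),
      (2*(N+1)+1).choose (2*j) * ((N+1)-j).choose 0 = (2*N+3).choose (2*j) := by
    intro j _
    rw [Nat.choose_zero_right, mul_one]
    have : 2*(N+1)+1 = 2*N+3 := by omega
    rw [this]
  have hsplit : F (N+1) 0 = 1 + ∑ j ∈ range (N+1), (2*N+3).choose (2*j+2) := by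
    rw [F, Finset.sum_congr rfl hfun, Finset.sum_range_succ' _ (N+1)]
    simp only [Nat.mul_succ, Nat.mul_zero, Nat.choose_zero_right]
    omega
  have hexp : ∑ j ∈ range (N+1), (2*N+3).choose (2*j+2)
      = F N 0 + 2 * H N 0 + ∑ j ∈ range (N+1), (2*N+1).choose (2*j+2) := by
    rw [F, H, Finset.mul_sum, ← Finset.sum_add_distrib, ← Finset.sum_add_distrib]
    apply Finset.sum_congr rfl; intro j hj
    rw [pasc2e, Nat.choose_zero_right]; ring
  have h1 := EA0 N
  have h2 := EB N 0
  simp only [Nat.choose_zero_right, mul_one] at h1 h2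
  omega

lemma R2 (N k : ℕ) : H (N+1) (k+1) = 2*H N (k+1) + H N k + 2*F N (k+1) + 2*F N k := by
  have hsplit : H (N+1) (k+1) = (2*N+3) * (N+1).choose (k+1)
      + ∑ j ∈ range (N+1), (2*N+3).choose (2*j+3) * (N-j).choose (k+1) := by
    rw [H, Finset.sum_range_succ' _ (N+1), add_comm]
    congr 1
    · have e0 : (2*(N+1)+1).choose (2*0+1) = 2*N+3 := by
        rw [show (2*0+1) = 1 from rfl, Nat.choose_one_right]; omega
      rw [e0]; simp
    · apply Finset.sum_congr rfl; intro j hj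
      have e1 : 2*(N+1)+1 = 2*N+3 := by omega
      have e2 : 2*(j+1)+1 = 2*j+3 := by omega
      have e3 : N+1-(j+1) = N-j := by omega
      rw [e1, e2, e3]
  have hexp : ∑ j ∈ range (N+1), (2*N+3).choose (2*j+3) * (N-j).choose (k+1)
      = H N (k+1)
        + 2 * ∑ j ∈ range (N+1), (2*N+1).choose (2*j+2) * (N-j).choose (k+1)
        + ∑ j ∈ range (N+1), (2*N+1).choose (2*j+3) * (N-j).choose (k+1) := by
    rw [H, Finset.mul_sum, ← Finset.sum_add_distrib, ← Finset.sum_add_distrib]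
    apply Finset.sum_congr rfl; intro j hj
    rw [pasc2o]; ring
  have h1 := EA N k
  have h2 := EB N (k+1)
  have h3 := OA N k
  have h4 := OB N (k+1)
  have hd : (2*N+3) * (N+1).choose (k+1)
      = 2*(N+1).choose (k+1) + (2*N+1)*(N+1).choose (k+1) := by ring
  omega

lemma R2b (N : ℕ) : H (N+1) 0 = 2*H N 0 + 2*F N 0 := by
  have hfun : ∀ j ∈ range (N+2),
      (2*(N+1)+1).choose (2*j+1) * ((N+1)-j).choose 0 = (2*N+3).choose (2*j+1) := by
    intro j _
    rw [Nat.choose_zero_right, mul_one]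
    have : 2*(N+1)+1 = 2*N+3 := by omega
    rw [this]
  have hsplit : H (N+1) 0 = (2*N+3) + ∑ j ∈ range (N+1), (2*N+3).choose (2*j+3) := by
    rw [H, Finset.sum_congr rfl hfun, Finset.sum_range_succ' _ (N+1)]
    have e0 : (2*N+3).choose (2*0+1) = 2*N+3 := by
      norm_num
    rw [e0]
    have : ∀ j ∈ range (N+1), (2*N+3).choose (2*(j+1)+1) = (2*N+3).choose (2*j+3) := by
      intro j _
      have : 2*(j+1)+1 = 2*j+3 := by omega
      rw [this]
    rw [Finset.sum_congr rfl this]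
    omega
  have hexp : ∑ j ∈ range (N+1), (2*N+3).choose (2*j+3)
      = H N 0 + 2 * ∑ j ∈ range (N+1), (2*N+1).choose (2*j+2)
        + ∑ j ∈ range (N+1), (2*N+1).choose (2*j+3) := by
    rw [H, Finset.mul_sum, ← Finset.sum_add_distrib, ← Finset.sum_add_distrib]
    apply Finset.sum_congr rfl; intro j hj
    rw [pasc2o, Nat.choose_zero_right]; ring
  have h1 := EA0 N
  have h2 := EB N 0
  have h3 := OA0 N
  have h4 := OB N 0
  simp only [Nat.choose_zero_right, mul_one] at h1 h2 h3 h4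
  omega

lemma Fzero (N k : ℕ) (h : N < k) : F N k = 0 := by
  apply Finset.sum_eq_zero
  intro j hj
  rw [Nat.choose_eq_zero_of_lt (show N - j < k by omega), mul_zero]

lemma Gzero (N k : ℕ) (h : N < k) : G N k = 0 := by
  rw [G, Nat.choose_eq_zero_of_lt (by omega), zero_mul]

lemma Grec0 (N : ℕ) : G (N+2) 0 = 4 * G (N+1) 0 := by
  simp [G, pow_succ]
  ring

lemma Grec1 (N : ℕ) : G (N+2) 1 = 4 * G (N+1) 1 + 2 * G (N+1) 0 := by
  rw [G, G, G]
  rw [show 2*(N+2)-1 = 2*N+3 by omega, show N+2-1 = N+1 by omega,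
    show 2*(N+1)-1 = 2*N+1 by omega, show N+1-1 = N by omega,
    show 2*(N+1)-0 = 2*N+2 by omega, show N+1-0 = N+1 by omega,
    Nat.choose_one_right, Nat.choose_one_right, Nat.choose_zero_right, pow_succ]
  ring

lemma Grec2 (N m : ℕ) (h : m ≤ N) :
    G (N+2) (m+2) + G N m = 4 * G (N+1) (m+2) + 2 * G (N+1) (m+1) := by
  rcases eq_or_lt_of_le h with rfl | hlt
  · -- m = N
    rw [G, G, G, G]
    rw [show 2*(m+2)-(m+2) = m+2 by omega, show m+2-(m+2) = 0 by omega,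
      show 2*m-m = m by omega, show m-m = 0 by omega,
      show 2*(m+1)-(m+1) = m+1 by omega, show m+1-(m+1) = 0 by omega,
      Nat.choose_self, Nat.choose_self, Nat.choose_self,
      Nat.choose_eq_zero_of_lt (show 2*(m+1)-(m+2) < m+2 by omega)]
    simp
  · obtain ⟨t, rfl⟩ : ∃ t, N = m+1+t := ⟨N-(m+1), by omega⟩
    rw [G, G, G, G]
    rw [show 2*(m+1+t+2)-(m+2) = (m+2*t+2)+2 by omega,
      show m+1+t+2-(m+2) = t+1 by omega,
      show 2*(m+1+t)-m = m+2*t+2 by omega,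
      show m+1+t-m = t+1 by omega,
      show 2*(m+1+t+1)-(m+2) = m+2*t+2 by omega,
      show m+1+t+1-(m+2) = t by omega,
      show 2*(m+1+t+1)-(m+1) = (m+2*t+2)+1 by omega,
      show m+1+t+1-(m+1) = t+1 by omega]
    have p1 : ((m+2*t+2)+2).choose (m+2)
        = ((m+2*t+2)+1).choose (m+1) + ((m+2*t+2)+1).choose (m+2) :=
      Nat.choose_succ_succ _ _
    have p2 : ((m+2*t+2)+1).choose (m+2)
        = (m+2*t+2).choose (m+1) + (m+2*t+2).choose (m+2) :=
      Nat.choose_succ_succ _ _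
    have p3 : ((m+2*t+2)+1).choose (m+1)
        = (m+2*t+2).choose m + (m+2*t+2).choose (m+1) :=
      Nat.choose_succ_succ _ _
    have key : ((m+2*t+2)+2).choose (m+2) + (m+2*t+2).choose m
        = (m+2*t+2).choose (m+2) + 2*(((m+2*t+2)+1).choose (m+1)) := by omega
    calc ((m+2*t+2)+2).choose (m+2) * 4^(t+1) + (m+2*t+2).choose m * 4^(t+1)
        = (((m+2*t+2)+2).choose (m+2) + (m+2*t+2).choose m) * 4^(t+1) := by ring
      _ = ((m+2*t+2).choose (m+2) + 2*(((m+2*t+2)+1).choose (m+1))) * 4^(t+1) := by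
          rw [key]
      _ = 4 * ((m+2*t+2).choose (m+2) * 4^t)
          + 2 * (((m+2*t+2)+1).choose (m+1) * 4^(t+1)) := by
          rw [pow_succ]; ring

lemma FG (N : ℕ) : ∀ k, F N k = G N k := by
  induction N using Nat.twoStepInduction with
  | zero =>
    intro k
    simp [F, G]
  | one =>
    intro k
    match k with
    | 0 => simp [F, G, Finset.sum_range_succ]
    | 1 => simp [F, G, Finset.sum_range_succ]
    | (n+2) =>
      rw [Fzero _ _ (by omega), Gzero _ _ (by omega)]
  | more N ih1 ih2 =>
    intro k
    by_cases hbig : N+2 < k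
    · rw [Fzero _ _ hbig, Gzero _ _ hbig]
    · push_neg at hbig
      match k with
      | 0 =>
        have r1 : F (N+2) 0 = 2*F (N+1) 0 + 2*H (N+1) 0 := R1b (N+1)
        have r2 := R2b N
        have r3 := R1b N
        have g0 := Grec0 N
        have i1 := ih2 0
        have i0 := ih1 0
        omega
      | 1 =>
        have r1 : F (N+2) 1 = 2*F (N+1) 1 + F (N+1) 0 + 2*H (N+1) 1 := R1 (N+1) 0
        have r2 : H (N+1) 1 = 2*H N 1 + H N 0 + 2*F N 1 + 2*F N 0 := R2 N 0
        have r3 : F (N+1) 1 = 2*F N 1 + F N 0 + 2*H N 1 := R1 N 0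
        have r4 := R1b N
        have g1 := Grec1 N
        have i1 := ih2 1
        have i0 := ih2 0
        have j1 := ih1 1
        have j0 := ih1 0
        omega
      | (m+2) =>
        have hm : m ≤ N := by omega
        have r1 : F (N+2) (m+2) = 2*F (N+1) (m+2) + F (N+1) (m+1) + 2*H (N+1) (m+2) :=
          R1 (N+1) (m+1)
        have r2 : H (N+1) (m+2) = 2*H N (m+2) + H N (m+1) + 2*F N (m+2) + 2*F N (m+1) :=
          R2 N (m+1)
        have r3 : F (N+1) (m+2) = 2*F N (m+2) + F N (m+1) + 2*H N (m+2) := R1 N (m+1)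
        have r4 := R1 N m
        have g2 := Grec2 N m hm
        have i2 := ih2 (m+2)
        have i1 := ih2 (m+1)
        have j2 := ih1 (m+2)
        have j1 := ih1 (m+1)
        have j0 := ih1 m
        omega

end BSI

theorem binom_sum_identity (N k : ℕ) (hk : 0 < k) (hkN : k ≤ N) :
    ∑ j ∈ Finset.range (N - k + 1),
      Nat.choose (2 * N + 1) (2 * j) * Nat.choose (N - j) k
      = Nat.choose (2 * N - k) k * 4 ^ (N - k) := by
  have hext : ∑ j ∈ Finset.range (N - k + 1),
      Nat.choose (2 * N + 1) (2 * j) * Nat.choose (N - j) k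
      = ∑ j ∈ Finset.range (N + 1),
      Nat.choose (2 * N + 1) (2 * j) * Nat.choose (N - j) k := by
    apply Finset.sum_subset
    · apply Finset.range_subset_range.2
      omega
    · intro x hx hnx
      rw [Finset.mem_range] at hx
      rw [Finset.mem_range, not_lt] at hnx
      rw [Nat.choose_eq_zero_of_lt (show N - x < k by omega), mul_zero]
  rw [hext]
  exact BSI.FG N k
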